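/- Every composition of elementary code maps is a trunk morphism: if q : C → D is a code map described by a key vector V (i.e., q(c)_j = c_i if V_j = i, q(c)_j = 0 if V_j = 0, q(c)_j = 1 if V_j = u), then for every trunk T ⊆ D the preimage q^{-1}(T) is a trunk in C. -/

import Mathlib

/-- The pullback of a code map `q : C → D`: the ring homomorphism
`q* : F_2^D → F_2^C`, `q*(f) = f ∘ q`. -/
def pullbackHom {n m : ℕ} {C : Set (Fin n → ZMod 2)} {D : Set (Fin m → ZMod 2)}
    (q : ↥C → ↥D) : (↥D → ZMod 2) →+* (↥C → ZMod 2) :=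
  Pi.ringHom fun c => Pi.evalRingHom (fun _ => ZMod 2) (q c)

/-- The `i`-th coordinate function of the neural ring `F_2^C`. -/
def coordFn {n : ℕ} (C : Set (Fin n → ZMod 2)) (i : Fin n) : ↥C → ZMod 2 :=
  fun c => (c : Fin n → ZMod 2) i

/-- A key vector entry is either a coordinate index `i` (`Sum.inl i`) or a constant bit
(`Sum.inr 0` for `0`, `Sum.inr 1` for `u`, i.e. `1`). A code map `q : C → D` is
*described by* a key vector `V` if `q(c)_j = c_i` when `V_j = i`, and `q(c)_j = b` when
`V_j` is the constant `b`. -/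
def DescribedBy {n m : ℕ} {C : Set (Fin n → ZMod 2)} {D : Set (Fin m → ZMod 2)}
    (q : ↥C → ↥D) (V : Fin m → (Fin n ⊕ ZMod 2)) : Prop :=
  ∀ (c : ↥C) (j : Fin m),
    (q c : Fin m → ZMod 2) j = Sum.elim (fun i => (c : Fin n → ZMod 2) i) id (V j)

/-- A neural ring homomorphism `φ : R_D → R_C` has key vector `V` when `φ(x_j) = y_i` if
`V_j = i`, and `φ(x_j)` is the constant `b` if `V_j` is the constant `b`. -/
def HasKeyVector {n m : ℕ} {C : Set (Fin n → ZMod 2)} {D : Set (Fin m → ZMod 2)}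
    (φ : (↥D → ZMod 2) →+* (↥C → ZMod 2)) (V : Fin m → (Fin n ⊕ ZMod 2)) : Prop :=
  ∀ j : Fin m,
    φ (coordFn D j) = Sum.elim (fun i => coordFn C i) (fun b => Function.const ↥C b) (V j)

/-- A subset `T` of a code `C` is a *trunk* if it is empty or of the form
`Tk_C(σ) = {c ∈ C : σ ⊆ supp(c)}` for some `σ ⊆ [n]`. -/
def IsTrunk {n : ℕ} {C : Set (Fin n → ZMod 2)} (T : Set ↥C) : Prop :=
  T = ∅ ∨ ∃ σ : Set (Fin n), T = {c : ↥C | ∀ i ∈ σ, (c : Fin n → ZMod 2) i = 1}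

/-- Every code map described by a key vector (i.e. every composition of elementary code
maps) is a trunk morphism: preimages of trunks are trunks. -/
theorem describedBy_is_trunk_morphism {n m : ℕ} {C : Set (Fin n → ZMod 2)}
    {D : Set (Fin m → ZMod 2)} (q : ↥C → ↥D) (V : Fin m → (Fin n ⊕ ZMod 2))
    (hq : DescribedBy q V) (T : Set ↥D) (hT : IsTrunk T) :
    IsTrunk (q ⁻¹' T) := by
  rcases hT with rfl | ⟨σ, rfl⟩
  · left; simp
  by_cases h : ∀ j ∈ σ, ∀ b : ZMod 2, V j = Sum.inr b → b = 1
  · right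
    refine ⟨{i | ∃ j ∈ σ, V j = Sum.inl i}, ?_⟩
    ext c
    simp only [Set.mem_preimage, Set.mem_setOf_eq]
    constructor
    · rintro hc i ⟨j, hj, hVj⟩
      have := hc j hj
      rw [hq c j, hVj] at this
      exact this
    · intro hc j hj
      rw [hq c j]
      rcases hV : V j with i | b
      · exact hc i ⟨j, hj, hV⟩
      · simpa using h j hj b hV
  · left
    push_neg at h
    obtain ⟨j, hj, b, hVj, hb⟩ := h
    have hb0 : b = 0 := (by decide : ∀ x : ZMod 2, x ≠ 1 → x = 0) b hb
    ext c
    simp only [Set.mem_preimage, Set.mem_setOf_eq, Set.mem_empty_iff_false, iff_false]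
    intro hc
    have h2 := hc j hj
    rw [hq c j, hVj, hb0] at h2
    simp at h2
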